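/- Let H be an ordered hyperfield and φ = c₁ ⊙ X₁ ⊞ ... ⊞ c_d ⊙ X_d a linear polynomial over H. Then the open halfspace HS(φ) = {p ∈ H^d : φ(p) ⊆ H⁺} is a conic set, and for an affine polynomial φ (with constant term) the open halfspace HS(φ) is convex. -/

import Mathlib

/-- The data of a hyperfield: a multivalued addition, multiplication,
negation, zero and one. -/
structure HyperfieldData (H : Type*) where
  hadd : H → H → Set H
  mul : H → H → H
  neg : H → H
  zero : H
  one : H

/-- The hyperfield axioms. -/
structure IsHyperfield {H : Type*} (D : HyperfieldData H) : Prop where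
  hadd_nonempty : ∀ a b, (D.hadd a b).Nonempty
  hadd_comm : ∀ a b, D.hadd a b = D.hadd b a
  hadd_assoc : ∀ a b c, (⋃ x ∈ D.hadd a b, D.hadd x c) = ⋃ y ∈ D.hadd b c, D.hadd a y
  zero_hadd : ∀ a, D.hadd D.zero a = {a}
  neg_mem : ∀ a, D.zero ∈ D.hadd a (D.neg a)
  neg_unique : ∀ a b, D.zero ∈ D.hadd a b → b = D.neg a
  reverse : ∀ a b c, a ∈ D.hadd b c ↔ c ∈ D.hadd a (D.neg b)
  mul_comm : ∀ a b, D.mul a b = D.mul b a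
  mul_assoc : ∀ a b c, D.mul (D.mul a b) c = D.mul a (D.mul b c)
  one_mul : ∀ a, D.mul D.one a = a
  mul_inv : ∀ a, a ≠ D.zero → ∃ b, D.mul a b = D.one
  zero_mul : ∀ a, D.mul D.zero a = D.zero
  distrib : ∀ a b c, D.mul a '' D.hadd b c = D.hadd (D.mul a b) (D.mul a c)
  zero_ne_one : D.zero ≠ D.one

/-- An ordering on a hyperfield: a set of positive elements closed under
hyperaddition and multiplication such that `H = P ⊔ {0} ⊔ (-P)`. -/
def IsOrdering {H : Type*} (D : HyperfieldData H) (P : Set H) : Prop :=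
  (∀ a ∈ P, ∀ b ∈ P, D.hadd a b ⊆ P) ∧
  (∀ a ∈ P, ∀ b ∈ P, D.mul a b ∈ P) ∧
  (∀ x : H, x ∈ P ∨ x = D.zero ∨ x ∈ D.neg '' P) ∧
  D.zero ∉ P ∧ D.zero ∉ D.neg '' P ∧ Disjoint P (D.neg '' P)

/-- A hyperfield homomorphism. -/
def IsHom {H1 H2 : Type*} (D1 : HyperfieldData H1) (D2 : HyperfieldData H2)
    (f : H1 → H2) : Prop :=
  (∀ a b, f '' D1.hadd a b ⊆ D2.hadd (f a) (f b)) ∧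
  (∀ a b, f (D1.mul a b) = D2.mul (f a) (f b)) ∧
  f D1.one = D2.one ∧ f D1.zero = D2.zero

/-- The iterated hypersum of a finite list of elements. -/
def listSum {H : Type*} (D : HyperfieldData H) : List H → Set H
  | [] => {D.zero}
  | x :: xs => ⋃ s ∈ listSum D xs, D.hadd x s

/-- The coordinatewise set `a ⊙ p ⊞ b ⊙ q ⊆ H^ι`. -/
def combo {H ι : Type*} (D : HyperfieldData H) (a b : H) (p q : ι → H) : Set (ι → H) :=
  {r | ∀ i, r i ∈ D.hadd (D.mul a (p i)) (D.mul b (q i))}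

/-- A convex subset of `H^ι`. -/
def IsConvexSet {H ι : Type*} (D : HyperfieldData H) (P : Set H) (S : Set (ι → H)) : Prop :=
  ∀ p ∈ S, ∀ q ∈ S, ∀ a ∈ P, ∀ b ∈ P, D.one ∈ D.hadd a b → combo D a b p q ⊆ S

/-- A conic subset of `H^ι`. -/
def IsConicSet {H ι : Type*} (D : HyperfieldData H) (P : Set H) (S : Set (ι → H)) : Prop :=
  ∀ p ∈ S, ∀ q ∈ S, ∀ a ∈ P, ∀ b ∈ P, combo D a b p q ⊆ S

/-- Membership in the convex hull of `T`: `q` lies in some finite convex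
combination of points of `T` (repetition allowed). -/
def InConv {H ι : Type*} (D : HyperfieldData H) (P : Set H) (T : Set (ι → H))
    (q : ι → H) : Prop :=
  ∃ l : List (H × (ι → H)), l ≠ [] ∧ (∀ x ∈ l, x.1 ∈ P ∧ x.2 ∈ T) ∧
    D.one ∈ listSum D (l.map Prod.fst) ∧
    ∀ i, q i ∈ listSum D (l.map fun x => D.mul x.1 (x.2 i))

/-- Membership in the conic hull of `T`. -/
def InCone {H ι : Type*} (D : HyperfieldData H) (P : Set H) (T : Set (ι → H))
    (q : ι → H) : Prop :=
  ∃ l : List (H × (ι → H)), l ≠ [] ∧ (∀ x ∈ l, x.1 ∈ P ∧ x.2 ∈ T) ∧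
    ∀ i, q i ∈ listSum D (l.map fun x => D.mul x.1 (x.2 i))

section Aux

variable {H : Type*} {D : HyperfieldData H}

lemma assoc₁ (hD : IsHyperfield D) {a b c w x : H} (hx : x ∈ D.hadd w c)
    (hw : w ∈ D.hadd a b) : ∃ y ∈ D.hadd b c, x ∈ D.hadd a y := by
  have h : x ∈ ⋃ w' ∈ D.hadd a b, D.hadd w' c := Set.mem_iUnion₂.2 ⟨w, hw, hx⟩
  rw [hD.hadd_assoc] at h
  simpa using Set.mem_iUnion₂.1 h

lemma assoc₂ (hD : IsHyperfield D) {a b c y x : H} (hx : x ∈ D.hadd a y)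
    (hy : y ∈ D.hadd b c) : ∃ w ∈ D.hadd a b, x ∈ D.hadd w c := by
  have h : x ∈ ⋃ y' ∈ D.hadd b c, D.hadd a y' := Set.mem_iUnion₂.2 ⟨y, hy, hx⟩
  rw [← hD.hadd_assoc] at h
  simpa using Set.mem_iUnion₂.1 h

/-- The four-term reassociation: if `a ∈ u ⊞ v`, `s ∈ s' ⊞ t'` and
`x ∈ a ⊞ s`, then `x ∈ S ⊞ T` with `S ∈ u ⊞ s'` and `T ∈ v ⊞ t'`. -/
lemma reassoc (hD : IsHyperfield D) {u v s' t' a s x : H}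
    (ha : a ∈ D.hadd u v) (hs : s ∈ D.hadd s' t') (hx : x ∈ D.hadd a s) :
    ∃ S ∈ D.hadd u s', ∃ T ∈ D.hadd v t', x ∈ D.hadd S T := by
  obtain ⟨w, hw, hxw⟩ := assoc₂ hD hx hs
  obtain ⟨z, hz, hwz⟩ := assoc₁ hD hw ha
  obtain ⟨m, hm, hxm⟩ := assoc₁ hD hxw hwz
  rw [hD.hadd_comm v s'] at hz
  obtain ⟨n, hn, hmn⟩ := assoc₁ hD hm hz
  obtain ⟨S, hS, hxS⟩ := assoc₂ hD hxm hmn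
  exact ⟨S, hS, n, hn, hxS⟩

/-- Key lemma: a sum of elements `x_i ∈ u_i ⊞ v_i` lies in the sum of the
sums of the `u_i` and the `v_i`. -/
lemma sum_hadd (hD : IsHyperfield D) :
    ∀ L : List (H × H × H), (∀ z ∈ L, z.1 ∈ D.hadd z.2.1 z.2.2) →
    ∀ x ∈ listSum D (L.map Prod.fst),
      ∃ s ∈ listSum D (L.map fun z => z.2.1),
      ∃ t ∈ listSum D (L.map fun z => z.2.2), x ∈ D.hadd s t := by
  intro L
  induction L with
  | nil =>
    intro _ x hx
    simp only [List.map_nil, listSum] at hx ⊢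
    refine ⟨D.zero, rfl, D.zero, rfl, ?_⟩
    rw [hD.zero_hadd]
    exact hx
  | cons z L ih =>
    intro hL x hx
    simp only [List.map_cons, listSum, Set.mem_iUnion₂] at hx ⊢
    obtain ⟨s, hs, hxs⟩ := hx
    obtain ⟨s', hs', t', ht', hstt⟩ := ih (fun w hw => hL w (List.mem_cons_of_mem _ hw)) s hs
    have ha := hL z List.mem_cons_self
    obtain ⟨S, hS, T, hT, hST⟩ := reassoc hD ha hstt hxs
    exact ⟨S, ⟨s', hs', hS⟩, T, ⟨t', ht', hT⟩, hST⟩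

/-- Scaling a list scales its hypersum. -/
lemma scale (hD : IsHyperfield D) (a : H) :
    ∀ l : List H, listSum D (l.map (D.mul a)) = D.mul a '' listSum D l := by
  intro l
  induction l with
  | nil =>
    simp only [List.map_nil, listSum, Set.image_singleton, hD.mul_comm a D.zero, hD.zero_mul]
  | cons x l ih =>
    simp only [List.map_cons, listSum, ih, Set.image_iUnion]
    ext y
    simp only [Set.mem_iUnion₂, Set.mem_iUnion]
    constructor
    · rintro ⟨s, ⟨t, ht, rfl⟩, hy⟩
      refine ⟨t, ht, ?_⟩
      rw [hD.distrib]; exact hy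
    · rintro ⟨t, ht, hy⟩
      rw [hD.distrib] at hy
      exact ⟨D.mul a t, ⟨t, ht, rfl⟩, hy⟩

end Aux

/-- open halfspaces of linear polynomials are conic, and open
halfspaces of affine polynomials are convex. -/
theorem stmt18 {H : Type*} {d : ℕ} (D : HyperfieldData H) (hD : IsHyperfield D)
    (P : Set H) (hP : IsOrdering D P) (c0 : H) (c : Fin d → H) :
    IsConicSet D P
      {p : Fin d → H | listSum D (List.ofFn fun i => D.mul (c i) (p i)) ⊆ P} ∧
    IsConvexSet D P
      {p : Fin d → H |
        listSum D (c0 :: List.ofFn fun i => D.mul (c i) (p i)) ⊆ P} := by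
  obtain ⟨hPadd, hPmul, -⟩ := hP
  -- a common rearrangement
  have rearr : ∀ a x y : H, D.mul x (D.mul a y) = D.mul a (D.mul x y) := by
    intro a x y
    rw [← hD.mul_assoc, hD.mul_comm x a, hD.mul_assoc]
  -- membership lemma for each coordinate term
  have coordmem : ∀ (a b : H) (p q r : Fin d → H), r ∈ combo D a b p q → ∀ i : Fin d,
      D.mul (c i) (r i) ∈ D.hadd (D.mul a (D.mul (c i) (p i))) (D.mul b (D.mul (c i) (q i))) := by
    intro a b p q r hr i
    have h1 : D.mul (c i) (r i) ∈
        D.mul (c i) '' D.hadd (D.mul a (p i)) (D.mul b (q i)) := ⟨_, hr i, rfl⟩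
    rw [hD.distrib, rearr a (c i) (p i), rearr b (c i) (q i)] at h1
    exact h1
  constructor
  · intro p hp q hq a ha b hb r hr x hx
    set L : List (H × H × H) := List.ofFn (fun i =>
      (D.mul (c i) (r i), D.mul a (D.mul (c i) (p i)), D.mul b (D.mul (c i) (q i)))) with hLdef
    have hmem : ∀ z ∈ L, z.1 ∈ D.hadd z.2.1 z.2.2 := by
      intro z hz
      rw [hLdef, List.mem_ofFn] at hz
      obtain ⟨i, rfl⟩ := hz
      exact coordmem a b p q r hr i
    have hmap1 : L.map Prod.fst = List.ofFn (fun i => D.mul (c i) (r i)) := by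
      rw [hLdef, List.map_ofFn]; rfl
    have hmap2 : L.map (fun z => z.2.1) =
        (List.ofFn (fun i => D.mul (c i) (p i))).map (D.mul a) := by
      rw [hLdef, List.map_ofFn, List.map_ofFn]; rfl
    have hmap3 : L.map (fun z => z.2.2) =
        (List.ofFn (fun i => D.mul (c i) (q i))).map (D.mul b) := by
      rw [hLdef, List.map_ofFn, List.map_ofFn]; rfl
    rw [← hmap1] at hx
    obtain ⟨s, hs, t, ht, hst⟩ := sum_hadd hD L hmem x hx
    rw [hmap2, scale hD] at hs
    rw [hmap3, scale hD] at ht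
    obtain ⟨s0, hs0, rfl⟩ := hs
    obtain ⟨t0, ht0, rfl⟩ := ht
    exact hPadd _ (hPmul a ha _ (hp hs0)) _ (hPmul b hb _ (hq ht0)) hst
  · intro p hp q hq a ha b hb hab r hr x hx
    set L : List (H × H × H) := (c0, D.mul a c0, D.mul b c0) :: List.ofFn (fun i =>
      (D.mul (c i) (r i), D.mul a (D.mul (c i) (p i)), D.mul b (D.mul (c i) (q i)))) with hLdef
    have hmem : ∀ z ∈ L, z.1 ∈ D.hadd z.2.1 z.2.2 := by
      intro z hz
      rw [hLdef, List.mem_cons] at hz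
      rcases hz with rfl | hz
      · have h1 : D.mul c0 D.one ∈ D.mul c0 '' D.hadd a b := ⟨_, hab, rfl⟩
        rw [hD.distrib] at h1
        rw [hD.mul_comm c0 D.one, hD.one_mul, hD.mul_comm c0 a, hD.mul_comm c0 b] at h1
        exact h1
      · rw [List.mem_ofFn] at hz
        obtain ⟨i, rfl⟩ := hz
        exact coordmem a b p q r hr i
    have hmap1 : L.map Prod.fst = c0 :: List.ofFn (fun i => D.mul (c i) (r i)) := by
      rw [hLdef, List.map_cons, List.map_ofFn]; rfl
    have hmap2 : L.map (fun z => z.2.1) =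
        (c0 :: List.ofFn (fun i => D.mul (c i) (p i))).map (D.mul a) := by
      rw [hLdef, List.map_cons, List.map_cons, List.map_ofFn, List.map_ofFn]; rfl
    have hmap3 : L.map (fun z => z.2.2) =
        (c0 :: List.ofFn (fun i => D.mul (c i) (q i))).map (D.mul b) := by
      rw [hLdef, List.map_cons, List.map_cons, List.map_ofFn, List.map_ofFn]; rfl
    rw [← hmap1] at hx
    obtain ⟨s, hs, t, ht, hst⟩ := sum_hadd hD L hmem x hx
    rw [hmap2, scale hD] at hs
    rw [hmap3, scale hD] at ht
    obtain ⟨s0, hs0, rfl⟩ := hs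
    obtain ⟨t0, ht0, rfl⟩ := ht
    exact hPadd _ (hPmul a ha _ (hp hs0)) _ (hPmul b hb _ (hq ht0)) hst
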